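/- arXiv:quant-ph/0506048 — 2 statements merged into one kernel-verified Lean document; each statement's English description precedes it below -/
import Mathlib

section
/- Let ω(θ) = arcsin(sin θ/√2) and define ψ̃_L(n, t) = (1/(2π)) ∫_{−π}^{π} e^{−i(t ω(θ) + n θ)} dθ and ψ_L(n, t) = ψ̃_L(n, t) + (1/(2π)) ∫_{−π}^{π} (cos θ/√(1 + cos²θ)) e^{−i(t ω(θ) + n θ)} dθ. Then for t ≥ 1, ψ_L(n, t) = ((t − n)/t) ψ̃_L(n, t). -/
open Real

noncomputable def ω (θ : ℝ) : ℝ := Real.arcsin (Real.sin θ / Real.sqrt 2)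

noncomputable def ψLtilde (n : ℤ) (t : ℕ) : ℂ :=
  (1 / (2 * π)) * ∫ θ in (-π)..π,
    Complex.exp (-Complex.I * ((t : ℂ) * (ω θ : ℂ) + (n : ℂ) * (θ : ℂ)))

noncomputable def ψL (n : ℤ) (t : ℕ) : ℂ :=
  ψLtilde n t + (1 / (2 * π)) * ∫ θ in (-π)..π,
    ((Real.cos θ / Real.sqrt (1 + Real.cos θ ^ 2) : ℝ) : ℂ) *
      Complex.exp (-Complex.I * ((t : ℂ) * (ω θ : ℂ) + (n : ℂ) * (θ : ℂ)))

noncomputable def gfun (θ : ℝ) : ℝ := Real.cos θ / Real.sqrt (1 + Real.cos θ ^ 2)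

lemma sqrt_pos' (θ : ℝ) : 0 < Real.sqrt (1 + Real.cos θ ^ 2) := by
  apply Real.sqrt_pos.2; nlinarith [sq_nonneg (Real.cos θ)]

lemma hω_deriv (θ : ℝ) : HasDerivAt ω (gfun θ) θ := by
  have h2 : (0:ℝ) < Real.sqrt 2 := by positivity
  have hx : |Real.sin θ / Real.sqrt 2| < 1 := by
    rw [abs_div, abs_of_pos h2, div_lt_one h2]
    calc |Real.sin θ| ≤ 1 := Real.abs_sin_le_one θ
    _ < Real.sqrt 2 := by
        nlinarith [Real.sq_sqrt (show (0:ℝ) ≤ 2 by norm_num), Real.sqrt_nonneg 2]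
  have h₁ : Real.sin θ / Real.sqrt 2 ≠ -1 := by
    intro h; rw [h] at hx; simp at hx
  have h₂ : Real.sin θ / Real.sqrt 2 ≠ 1 := by
    intro h; rw [h] at hx; simp at hx
  have harc := Real.hasDerivAt_arcsin h₁ h₂
  have hin : HasDerivAt (fun θ => Real.sin θ / Real.sqrt 2) (Real.cos θ / Real.sqrt 2) θ :=
    (Real.hasDerivAt_sin θ).div_const _
  have := harc.comp θ hin
  refine this.congr_deriv ?_
  symm
  have hs2 : Real.sqrt 2 ^ 2 = 2 := Real.sq_sqrt (by norm_num)
  have key : 1 - (Real.sin θ / Real.sqrt 2) ^ 2 = (1 + Real.cos θ ^ 2) / 2 := by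
    rw [div_pow, hs2]
    have := Real.sin_sq_add_cos_sq θ
    field_simp; nlinarith
  rw [key, Real.sqrt_div (by nlinarith [sq_nonneg (Real.cos θ)]) 2]
  have hpos := sqrt_pos' θ
  unfold gfun
  field_simp


lemma hcont_ω : Continuous ω := Real.continuous_arcsin.comp (Real.continuous_sin.div_const _)

lemma hcont_g : Continuous gfun := by
  apply Continuous.div Real.continuous_cos
  · exact Real.continuous_sqrt.comp (by continuity)
  · exact fun θ => (sqrt_pos' θ).ne'

lemma hF_deriv (n : ℤ) (t : ℕ) (θ : ℝ) :
    HasDerivAt (fun θ : ℝ => Complex.exp (-Complex.I * ((t : ℂ) * (ω θ : ℂ) + (n : ℂ) * (θ : ℂ))))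
      ((-Complex.I * ((t : ℂ) * (gfun θ : ℂ) + (n : ℂ))) *
        Complex.exp (-Complex.I * ((t : ℂ) * (ω θ : ℂ) + (n : ℂ) * (θ : ℂ)))) θ := by
  have h1 : HasDerivAt (fun θ : ℝ => ((ω θ : ℝ) : ℂ)) ((gfun θ : ℂ)) θ :=
    (hω_deriv θ).ofReal_comp
  have h2 : HasDerivAt (fun θ : ℝ => (θ : ℂ)) 1 θ := (hasDerivAt_id θ).ofReal_comp
  have h3 : HasDerivAt (fun θ : ℝ => -Complex.I * ((t : ℂ) * (ω θ : ℂ) + (n : ℂ) * (θ : ℂ)))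
      (-Complex.I * ((t : ℂ) * (gfun θ : ℂ) + (n : ℂ))) θ := by
    have := ((h1.const_mul (t : ℂ)).add (h2.const_mul (n : ℂ))).const_mul (-Complex.I)
    refine this.congr_deriv ?_
    ring
  have h4 := h3.cexp
  rwa [mul_comm] at h4

theorem stmt_11 (n : ℤ) (t : ℕ) (ht : 1 ≤ t) (hpar : n ≡ (t : ℤ) [ZMOD 2]) :
    ψL n t = (((t : ℂ) - (n : ℂ)) / (t : ℂ)) * ψLtilde n t := by
  set F : ℝ → ℂ := fun θ => Complex.exp (-Complex.I * ((t : ℂ) * (ω θ : ℂ) + (n : ℂ) * (θ : ℂ)))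
    with hFdef
  have hcontF : Continuous F := by
    apply Complex.continuous_exp.comp
    exact continuous_const.mul
      (((continuous_const.mul (Complex.continuous_ofReal.comp hcont_ω)).add
        (continuous_const.mul Complex.continuous_ofReal)))
  have hcontgF : Continuous (fun θ : ℝ => (gfun θ : ℂ) * F θ) :=
    (Complex.continuous_ofReal.comp hcont_g).mul hcontF
  have hftc : (∫ θ in (-π)..π, (-Complex.I * ((t : ℂ) * (gfun θ : ℂ) + (n : ℂ))) * F θ)
      = F π - F (-π) := by
    apply intervalIntegral.integral_eq_sub_of_hasDerivAt (fun θ _ => hF_deriv n t θ)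
    apply Continuous.intervalIntegrable
    exact (continuous_const.mul
      ((continuous_const.mul (Complex.continuous_ofReal.comp hcont_g)).add
        continuous_const)).mul hcontF
  have hωπ : ω π = 0 := by unfold ω; simp
  have hωmπ : ω (-π) = 0 := by unfold ω; simp
  have hFeq : F π = F (-π) := by
    simp only [hFdef, hωπ, hωmπ, Complex.ofReal_zero, mul_zero, zero_add]
    rw [Complex.exp_eq_exp_iff_exists_int]
    refine ⟨-n, ?_⟩
    push_cast
    ring
  set A : ℂ := ∫ θ in (-π)..π, (gfun θ : ℂ) * F θ with hA
  set B : ℂ := ∫ θ in (-π)..π, F θ with hB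
  have hsplit : (∫ θ in (-π)..π, (-Complex.I * ((t : ℂ) * (gfun θ : ℂ) + (n : ℂ))) * F θ)
      = (-Complex.I * (t : ℂ)) * A + (-Complex.I * (n : ℂ)) * B := by
    rw [hA, hB, ← intervalIntegral.integral_const_mul, ← intervalIntegral.integral_const_mul,
      ← intervalIntegral.integral_add
        ((hcontgF.intervalIntegrable _ _).const_mul _)
        ((hcontF.intervalIntegrable _ _).const_mul _)]
    congr 1
    funext θ
    ring
  have h0 : (t : ℂ) * A + (n : ℂ) * B = 0 := by
    have hz : -Complex.I * ((t : ℂ) * A + (n : ℂ) * B) = 0 := by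
      rw [hFeq, sub_self] at hftc
      linear_combination hsplit.symm.trans hftc
    rcases mul_eq_zero.1 hz with h | h
    · exact absurd h (by simpa using Complex.I_ne_zero)
    · exact h
  have htne : (t : ℂ) ≠ 0 := by
    exact_mod_cast Nat.cast_ne_zero.2 (by omega)
  have hψL : ψL n t = (1 / (2 * (π : ℂ))) * B + (1 / (2 * (π : ℂ))) * A := by
    rw [ψL, ψLtilde]
    rfl
  have hψLt : ψLtilde n t = (1 / (2 * (π : ℂ))) * B := by
    rw [ψLtilde]
  have hAval : A = -((n : ℂ) * B) / t := by
    rw [eq_div_iff htne]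
    linear_combination h0
  rw [hψL, hψLt, hAval]
  field_simp
  ring
end

section
/- For real a with |a| < 1 and every nonnegative integer m, ∫_0^{π/2} cos(2mθ)/(1 − a² sin²θ) dθ = ((−1)^m π / (2√(1 − a²))) · ((1 − √(1 − a²))/a)^{2m} (with the convention that the right side equals π/2 when m = 0 and a = 0). -/
open Real intervalIntegral

private lemma denom_pos {a : ℝ} (ha : |a| < 1) (θ : ℝ) : 0 < 1 - a ^ 2 * sin θ ^ 2 := by
  have h1 : a ^ 2 < 1 := by nlinarith [sq_abs a, abs_nonneg a]
  nlinarith [mul_nonneg (sq_nonneg a) (sub_nonneg.mpr (sin_sq_le_one θ))]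

private lemma contf {a : ℝ} (ha : |a| < 1) (k : ℝ) :
    Continuous fun θ : ℝ => cos (k * θ) / (1 - a ^ 2 * sin θ ^ 2) := by
  apply Continuous.div (by fun_prop) (by fun_prop)
  exact fun θ => ne_of_gt (denom_pos ha θ)

private lemma cont1 {a : ℝ} (ha : |a| < 1) :
    Continuous fun θ : ℝ => 1 / (1 - a ^ 2 * sin θ ^ 2) := by
  apply Continuous.div continuous_const (by fun_prop)
  exact fun θ => ne_of_gt (denom_pos ha θ)

private lemma alg1 (s co c a : ℝ) (hp : s ^ 2 + co ^ 2 = 1) (hc : c ^ 2 = 1 - a ^ 2) :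
    ((c - 1) * s * co) ^ 2 + (co ^ 2 + c * s ^ 2) ^ 2 = 1 - a ^ 2 * s ^ 2 := by
  linear_combination (co ^ 2 + c ^ 2 * s ^ 2 + 1) * hp + s ^ 2 * hc

private lemma alg2 (s co c a : ℝ) (hp : s ^ 2 + co ^ 2 = 1) (hc : c ^ 2 = 1 - a ^ 2) :
    ((c - 1) * co * co + (c - 1) * s * (-s)) * (co ^ 2 + c * s ^ 2)
      - (c - 1) * s * co * (2 * co * (-s) + c * (2 * s * co))
      = c - (1 - a ^ 2 * s ^ 2) := by
  linear_combination ((c - 1) * (co ^ 2 - c * s ^ 2 + 1)) * hp - s ^ 2 * hc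

private lemma I0 {a : ℝ} (ha : |a| < 1) :
    ∫ θ in (0:ℝ)..(π/2), 1 / (1 - a ^ 2 * sin θ ^ 2)
      = π / (2 * Real.sqrt (1 - a ^ 2)) := by
  have h1a : (0:ℝ) < 1 - a ^ 2 := by nlinarith [sq_abs a, abs_nonneg a]
  set c := Real.sqrt (1 - a ^ 2) with hc
  have hcpos : 0 < c := Real.sqrt_pos.mpr h1a
  have hcsq : c ^ 2 = 1 - a ^ 2 := Real.sq_sqrt h1a.le
  have key : ∀ θ : ℝ, HasDerivAt
      (fun θ : ℝ => (θ + arctan ((c - 1) * sin θ * cos θ / (cos θ ^ 2 + c * sin θ ^ 2))) / c)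
      (1 / (1 - a ^ 2 * sin θ ^ 2)) θ := by
    intro θ
    have hp := sin_sq_add_cos_sq θ
    have hv : 0 < cos θ ^ 2 + c * sin θ ^ 2 := by
      nlinarith [sq_nonneg (sin θ), sq_nonneg (cos θ)]
    have hu : HasDerivAt (fun θ : ℝ => (c - 1) * sin θ * cos θ)
        ((c - 1) * cos θ * cos θ + (c - 1) * sin θ * (-sin θ)) θ :=
      (((hasDerivAt_sin θ).const_mul (c - 1)).mul (hasDerivAt_cos θ))
    have hw : HasDerivAt (fun θ : ℝ => cos θ ^ 2 + c * sin θ ^ 2)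
        (2 * cos θ * (-sin θ) + c * (2 * sin θ * cos θ)) θ := by
      have h1 := ((hasDerivAt_cos θ).fun_pow 2)
      have h2 := (((hasDerivAt_sin θ).fun_pow 2).const_mul c)
      exact (h1.add h2).congr_deriv (by ring)
    have hdiv := hu.div hw (ne_of_gt hv)
    have harc := hdiv.arctan
    have hsum := ((hasDerivAt_id θ).add harc).div_const c
    set U := (c - 1) * sin θ * cos θ with hU
    set V := cos θ ^ 2 + c * sin θ ^ 2 with hV
    set N := ((c - 1) * cos θ * cos θ + (c - 1) * sin θ * (-sin θ)) * V
      - U * (2 * cos θ * (-sin θ) + c * (2 * sin θ * cos θ)) with hN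
    have hUV : U ^ 2 + V ^ 2 = 1 - a ^ 2 * sin θ ^ 2 := alg1 _ _ _ _ hp hcsq
    have hNval : N = c - (1 - a ^ 2 * sin θ ^ 2) := alg2 _ _ _ _ hp hcsq
    have hd0 : (1 - a ^ 2 * sin θ ^ 2) ≠ 0 := ne_of_gt (denom_pos ha θ)
    have hval : (1 + 1 / (1 + (U / V) ^ 2) * (N / V ^ 2)) / c
        = 1 / (1 - a ^ 2 * sin θ ^ 2) := by
      have h2 : 1 + (U / V) ^ 2 = (1 - a ^ 2 * sin θ ^ 2) / V ^ 2 := by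
        rw [div_pow, ← hUV]
        field_simp
        ring
      rw [h2, hNval]
      rw [one_div_div]
      field_simp
      ring
    exact hval ▸ hsum
  rw [intervalIntegral.integral_eq_sub_of_hasDerivAt (fun θ _ => key θ)
    ((cont1 ha).intervalIntegrable 0 (π/2))]
  simp [cos_pi_div_two, sin_pi_div_two]
  ring

private lemma cos_int_zero (b : ℝ) (hb : ∃ n : ℕ, b * (π/2) = n * π) (hb0 : b ≠ 0) :
    ∫ θ in (0:ℝ)..(π/2), cos (b * θ) = 0 := by
  rw [intervalIntegral.integral_comp_mul_left (fun x => cos x) hb0]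
  obtain ⟨n, hn⟩ := hb
  rw [integral_cos]
  simp [hn, Real.sin_nat_mul_pi]

private lemma main_ne {a : ℝ} (ha : |a| < 1) (ha0 : a ≠ 0) (m : ℕ) :
    ∫ θ in (0 : ℝ)..(π / 2), Real.cos (2 * m * θ) / (1 - a ^ 2 * Real.sin θ ^ 2)
      = π / (2 * Real.sqrt (1 - a ^ 2)) *
        (-(((1 - Real.sqrt (1 - a ^ 2)) / a) ^ 2)) ^ m := by
  have h1a : (0:ℝ) < 1 - a ^ 2 := by nlinarith [sq_abs a, abs_nonneg a]
  set c := Real.sqrt (1 - a ^ 2) with hc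
  have hcpos : 0 < c := Real.sqrt_pos.mpr h1a
  have hcsq : c ^ 2 = 1 - a ^ 2 := Real.sq_sqrt h1a.le
  set s : ℝ := -(((1 - c) / a) ^ 2) with hsdef
  have ha2 : a ^ 2 ≠ 0 := pow_ne_zero 2 ha0
  have hs2 : s ^ 2 = -(2 * (2 - a ^ 2) / a ^ 2) * s - 1 := by
    rw [hsdef]
    field_simp
    linear_combination (a ^ 2 + 1 - c ^ 2 + 2 * (1 - c) ^ 2) * hcsq
  have hint : ∀ b : ℝ, IntervalIntegrable
      (fun θ => cos (b * θ) / (1 - a ^ 2 * sin θ ^ 2)) MeasureTheory.volume 0 (π/2) :=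
    fun b => (contf ha b).intervalIntegrable _ _
  have hint1 : IntervalIntegrable (fun θ : ℝ => 1 / (1 - a ^ 2 * sin θ ^ 2))
      MeasureTheory.volume 0 (π/2) := (cont1 ha).intervalIntegrable _ _
  have hintcos : ∀ b : ℝ, IntervalIntegrable (fun θ : ℝ => cos (b * θ))
      MeasureTheory.volume 0 (π/2) :=
    fun b => (Real.continuous_cos.comp (continuous_const.mul continuous_id)).intervalIntegrable _ _
  have hc2 : ∀ θ : ℝ, cos (2 * θ) = 1 - 2 * sin θ ^ 2 := by
    intro θ; have := sin_sq_add_cos_sq θ; rw [cos_two_mul]; linarith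
  -- base case 0
  have base0 : ∫ θ in (0:ℝ)..(π/2), cos (2 * ((0:ℕ):ℝ) * θ) / (1 - a ^ 2 * sin θ ^ 2)
      = π / (2 * c) * s ^ (0:ℕ) := by
    have : (fun θ : ℝ => cos (2 * ((0:ℕ):ℝ) * θ) / (1 - a ^ 2 * sin θ ^ 2))
        = fun θ : ℝ => 1 / (1 - a ^ 2 * sin θ ^ 2) := by
      funext θ; norm_num
    rw [this, I0 ha]
    simp [hc]
  -- base case 1
  have base1 : ∫ θ in (0:ℝ)..(π/2), cos (2 * ((1:ℕ):ℝ) * θ) / (1 - a ^ 2 * sin θ ^ 2)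
      = π / (2 * c) * s ^ (1:ℕ) := by
    have hpt1 : ∀ θ : ℝ, cos (2 * ((1:ℕ):ℝ) * θ) / (1 - a ^ 2 * sin θ ^ 2)
        = 2 / a ^ 2 - (2 - a ^ 2) / a ^ 2 * (1 / (1 - a ^ 2 * sin θ ^ 2)) := by
      intro θ
      have hd := (denom_pos ha θ).ne'
      have hd' : 1 - sin θ ^ 2 * a ^ 2 ≠ 0 := by rwa [mul_comm] at hd
      rw [show (2:ℝ) * ((1:ℕ):ℝ) * θ = 2 * θ by push_cast; ring, hc2 θ]
      field_simp
      ring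
    simp only [hpt1]
    rw [intervalIntegral.integral_sub intervalIntegrable_const (hint1.const_mul _),
      intervalIntegral.integral_const, intervalIntegral.integral_const_mul, I0 ha]
    rw [smul_eq_mul, pow_one, hsdef]
    field_simp
    ring_nf
    linear_combination (π * a ^ 2 - 2 * π + 2 * π * c + π * (2 * c * a ^ 4 - 2 * c - a ^ 2 + 2) + π * c * (1 - 2 * a ^ 4)) * hcsq
  -- inductive step
  have step : ∀ k : ℕ,
      (∫ θ in (0:ℝ)..(π/2), cos (2 * ((k:ℕ):ℝ) * θ) / (1 - a ^ 2 * sin θ ^ 2)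
        = π / (2 * c) * s ^ k) →
      (∫ θ in (0:ℝ)..(π/2), cos (2 * ((k+1:ℕ):ℝ) * θ) / (1 - a ^ 2 * sin θ ^ 2)
        = π / (2 * c) * s ^ (k+1)) →
      (∫ θ in (0:ℝ)..(π/2), cos (2 * ((k+2:ℕ):ℝ) * θ) / (1 - a ^ 2 * sin θ ^ 2)
        = π / (2 * c) * s ^ (k+2)) := by
    intro k hk hk1
    have hpt : ∀ θ : ℝ, cos (2 * ((k+2:ℕ):ℝ) * θ) / (1 - a ^ 2 * sin θ ^ 2)
        = 4 / a ^ 2 * cos (2 * ((k:ℝ)+1) * θ)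
          - (2 * (2 - a ^ 2) / a ^ 2 * (cos (2 * ((k:ℝ)+1) * θ) / (1 - a ^ 2 * sin θ ^ 2))
             + cos (2 * ((k:ℝ)) * θ) / (1 - a ^ 2 * sin θ ^ 2)) := by
      intro θ
      have hd := (denom_pos ha θ).ne'
      have hd' : 1 - sin θ ^ 2 * a ^ 2 ≠ 0 := by rwa [mul_comm] at hd
      have e1 : (2:ℝ) * ((k+2:ℕ):ℝ) * θ = 2 * ((k:ℝ)+1) * θ + 2 * θ := by push_cast; ring
      have e2 : (2:ℝ) * ((k:ℝ)) * θ = 2 * ((k:ℝ)+1) * θ - 2 * θ := by ring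
      rw [e1, e2, Real.cos_add, Real.cos_sub, hc2 θ]
      field_simp
      ring
    simp only [hpt]
    rw [intervalIntegral.integral_sub ((hintcos _).const_mul _)
        (((hint (2 * ((k:ℝ)+1))).const_mul _).add (hint (2 * (k:ℝ)))),
      intervalIntegral.integral_const_mul,
      intervalIntegral.integral_add ((hint (2 * ((k:ℝ)+1))).const_mul _) (hint (2 * (k:ℝ))),
      intervalIntegral.integral_const_mul]
    have h0 : ∫ θ in (0:ℝ)..(π/2), cos (2 * ((k:ℝ)+1) * θ) = 0 := by
      apply cos_int_zero
      · exact ⟨k+1, by push_cast; ring⟩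
      · positivity
    have hk' : (∫ θ in (0:ℝ)..(π/2), cos (2 * ((k:ℝ)) * θ) / (1 - a ^ 2 * sin θ ^ 2))
        = π / (2 * c) * s ^ k := hk
    have hk1' : (∫ θ in (0:ℝ)..(π/2), cos (2 * ((k:ℝ)+1) * θ) / (1 - a ^ 2 * sin θ ^ 2))
        = π / (2 * c) * s ^ (k+1) := by
      rw [← hk1]; norm_num
    rw [h0, hk', hk1']
    rw [show k+2 = (k+1)+1 from rfl, pow_succ, pow_succ]
    linear_combination (-(π / (2 * c) * s ^ k)) * hs2
  have H : ∀ k : ℕ,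
      (∫ θ in (0:ℝ)..(π/2), cos (2 * ((k:ℕ):ℝ) * θ) / (1 - a ^ 2 * sin θ ^ 2)
        = π / (2 * c) * s ^ k) ∧
      (∫ θ in (0:ℝ)..(π/2), cos (2 * ((k+1:ℕ):ℝ) * θ) / (1 - a ^ 2 * sin θ ^ 2)
        = π / (2 * c) * s ^ (k+1)) := by
    intro k
    induction k with
    | zero => exact ⟨base0, base1⟩
    | succ n ih => exact ⟨ih.2, step n ih.1 ih.2⟩
  exact (H m).1

theorem stmt_17 (a : ℝ) (ha : |a| < 1) (m : ℕ) :
    ∫ θ in (0 : ℝ)..(π / 2), Real.cos (2 * m * θ) / (1 - a ^ 2 * Real.sin θ ^ 2)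
      = ((-1 : ℝ) ^ m * π / (2 * Real.sqrt (1 - a ^ 2))) *
        ((1 - Real.sqrt (1 - a ^ 2)) / a) ^ (2 * m) := by
  rcases eq_or_ne a 0 with rfl | ha0
  · rcases Nat.eq_zero_or_pos m with rfl | hm
    · simp only [Nat.cast_zero, mul_zero, zero_mul, Real.cos_zero, pow_zero, mul_one]
      norm_num [Real.sqrt_one]
    · have hm' : (m:ℝ) ≠ 0 := Nat.cast_ne_zero.mpr hm.ne'
      have h0 : ∫ θ in (0:ℝ)..(π/2), cos (2 * (m:ℝ) * θ) = 0 := by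
        apply cos_int_zero
        · exact ⟨m, by ring⟩
        · positivity
      have hz : ((1 - Real.sqrt (1 - (0:ℝ) ^ 2)) / 0) ^ (2 * m) = 0 := by
        rw [div_zero]
        exact zero_pow (by omega)
      rw [hz, mul_zero]
      simpa using h0
  · rw [main_ne ha ha0 m, neg_pow, pow_mul]
    ring
end
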